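/- For nonzero rationals a and b and k ≥ 1, the graded Q-algebras Q[h,v]/(hv, h^{2k+1}, h^{2k} − a v^2) and Q[h,v]/(hv, h^{2k+1}, h^{2k} − b v^2) (deg h = 2, deg v = 2k) are isomorphic if and only if a/b is a square in Q. -/

import Mathlib

open MvPolynomial

/-- The rational cohomology algebra of a `2k`-dimensional `a`-twisted quadric:
`R_a = ℚ[h,v]/(hv, h^{2k+1}, h^{2k} − a v²)`, `h = X 0`, `v = X 1`. -/
noncomputable def twistedQuadricIdealQ (k : ℕ) (a : ℚ) : Ideal (MvPolynomial (Fin 2) ℚ) :=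
  Ideal.span {X 0 * X 1, X 0 ^ (2 * k + 1), X 0 ^ (2 * k) - C a * X 1 ^ 2}

/-- The degree-`j` graded piece of `R_a` for the grading `deg h = 2`, `deg v = 2k`. -/
noncomputable def twistedQuadricPieceQ (k : ℕ) (a : ℚ) (j : ℕ) :
    Submodule ℚ (MvPolynomial (Fin 2) ℚ ⧸ twistedQuadricIdealQ k a) :=
  Submodule.map (Ideal.Quotient.mkₐ ℚ (twistedQuadricIdealQ k a)).toLinearMap
    (weightedHomogeneousSubmodule ℚ ![2, 2 * k] j)

noncomputable def scaleV (c : ℚ) : MvPolynomial (Fin 2) ℚ →ₐ[ℚ] MvPolynomial (Fin 2) ℚ :=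
  aeval ![X 0, C c * X 1]

@[simp] lemma scaleV_X0 (c : ℚ) : scaleV c (X 0) = X 0 := by simp [scaleV]
@[simp] lemma scaleV_X1 (c : ℚ) : scaleV c (X 1) = C c * X 1 := by simp [scaleV]

lemma scaleV_comp (c d : ℚ) : (scaleV c).comp (scaleV d) = scaleV (c * d) := by
  apply MvPolynomial.algHom_ext
  intro i
  fin_cases i <;> simp [mul_assoc, mul_comm, mul_left_comm]

lemma scaleV_one : scaleV 1 = AlgHom.id ℚ _ := by
  apply MvPolynomial.algHom_ext
  intro i
  fin_cases i <;> simp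

noncomputable def scaleVE (c : ℚ) (hc : c ≠ 0) :
    MvPolynomial (Fin 2) ℚ ≃ₐ[ℚ] MvPolynomial (Fin 2) ℚ :=
  AlgEquiv.ofAlgHom (scaleV c) (scaleV c⁻¹)
    (by rw [scaleV_comp, mul_inv_cancel₀ hc, scaleV_one])
    (by rw [scaleV_comp, inv_mul_cancel₀ hc, scaleV_one])

lemma scaleV_monomial (c : ℚ) (d : Fin 2 →₀ ℕ) (r : ℚ) :
    scaleV c (monomial d r) = monomial d (r * c ^ (d 1)) := by
  have h1 : ∀ s : ℚ, (monomial d s : MvPolynomial (Fin 2) ℚ) = C s * (X 0 ^ d 0 * X 1 ^ d 1) := by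
    intro s
    rw [monomial_eq, Finsupp.prod_pow, Fin.prod_univ_two]
  have hC : scaleV c (C r) = C r := by simp [scaleV]
  rw [h1, h1, map_mul, map_mul, map_pow, map_pow, scaleV_X0, scaleV_X1, hC]
  rw [mul_pow, ← C_pow, map_mul]
  ring

lemma scaleV_WH (c : ℚ) (w : Fin 2 → ℕ) (j : ℕ) {p : MvPolynomial (Fin 2) ℚ}
    (hp : p ∈ weightedHomogeneousSubmodule ℚ w j) :
    scaleV c p ∈ weightedHomogeneousSubmodule ℚ w j := by
  rw [mem_weightedHomogeneousSubmodule] at hp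
  rw [← p.support_sum_monomial_coeff, map_sum]
  apply Submodule.sum_mem
  intro d hd
  rw [scaleV_monomial, mem_weightedHomogeneousSubmodule]
  exact isWeightedHomogeneous_monomial _ _ _ (hp (mem_support_iff.mp hd))

lemma scaleV_map_WH (c : ℚ) (hc : c ≠ 0) (w : Fin 2 → ℕ) (j : ℕ) :
    Submodule.map (scaleV c).toLinearMap (weightedHomogeneousSubmodule ℚ w j)
      = weightedHomogeneousSubmodule ℚ w j := by
  apply le_antisymm
  · rintro _ ⟨p, hp, rfl⟩
    exact scaleV_WH c w j hp
  · intro q hq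
    refine ⟨scaleV c⁻¹ q, scaleV_WH c⁻¹ w j hq, ?_⟩
    have := congrArg (fun f => f q) (scaleV_comp c c⁻¹)
    simp only [AlgHom.comp_apply] at this
    simpa [mul_inv_cancel₀ hc, scaleV_one] using this


lemma ideal_map_scaleV (k : ℕ) (a b c : ℚ) (hc : c ≠ 0) (hb : a * c ^ 2 = b) :
    (twistedQuadricIdealQ k a).map (scaleVE c hc : MvPolynomial (Fin 2) ℚ →+* MvPolynomial (Fin 2) ℚ)
      = twistedQuadricIdealQ k b := by
  have hfun : ∀ x, (scaleVE c hc : MvPolynomial (Fin 2) ℚ →+* MvPolynomial (Fin 2) ℚ) x = scaleV c x := fun _ => rfl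
  unfold twistedQuadricIdealQ
  rw [Ideal.map_span]
  rw [Set.image_insert_eq, Set.image_insert_eq, Set.image_singleton]
  rw [hfun, hfun, hfun]
  have e1 : scaleV c (X 0 * X 1) = C c * (X 0 * X 1) := by
    rw [map_mul, scaleV_X0, scaleV_X1]; ring
  have e2 : scaleV c (X 0 ^ (2*k+1)) = X 0 ^ (2*k+1) := by
    rw [map_pow, scaleV_X0]
  have e3 : scaleV c (X 0 ^ (2*k) - C a * X 1 ^ 2) = X 0 ^ (2*k) - C b * X 1 ^ 2 := by
    rw [map_sub, map_pow, map_mul, map_pow, scaleV_X0, scaleV_X1]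
    have : scaleV c (C a) = C a := by simp [scaleV]
    rw [this, ← hb]
    rw [mul_pow, ← C_pow, map_mul]
    ring
  rw [e1, e2, e3]
  apply le_antisymm
  · rw [Ideal.span_le]
    intro x hx
    simp only [Set.mem_insert_iff, Set.mem_singleton_iff] at hx
    rcases hx with rfl | rfl | rfl
    · exact Ideal.mul_mem_left _ _ (Ideal.subset_span (by simp))
    · exact Ideal.subset_span (by simp)
    · exact Ideal.subset_span (by simp)
  · rw [Ideal.span_le]
    intro x hx
    simp only [Set.mem_insert_iff, Set.mem_singleton_iff] at hx
    rcases hx with rfl | rfl | rfl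
    · have hx : (X 0 * X 1 : MvPolynomial (Fin 2) ℚ) = C c⁻¹ * (C c * (X 0 * X 1)) := by
        rw [← mul_assoc, ← C_mul, inv_mul_cancel₀ hc, C_1, one_mul]
      nth_rewrite 2 [hx]
      exact Ideal.mul_mem_left _ _ (Ideal.subset_span (Set.mem_insert _ _))
    · exact Ideal.subset_span (by simp)
    · exact Ideal.subset_span (by simp)


lemma backward_dir (k : ℕ) (a b c : ℚ) (hc : c ≠ 0) (hbc : a * c ^ 2 = b) :
    ∃ e : (MvPolynomial (Fin 2) ℚ ⧸ twistedQuadricIdealQ k a)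
        ≃ₐ[ℚ] (MvPolynomial (Fin 2) ℚ ⧸ twistedQuadricIdealQ k b),
      ∀ j : ℕ, (twistedQuadricPieceQ k a j).map e.toLinearMap = twistedQuadricPieceQ k b j := by
  refine ⟨Ideal.quotientEquivAlg _ _ (scaleVE c hc) (ideal_map_scaleV k a b c hc hbc).symm, ?_⟩
  intro j
  set E := Ideal.quotientEquivAlg _ _ (scaleVE c hc) (ideal_map_scaleV k a b c hc hbc).symm
  have hE : ∀ p : MvPolynomial (Fin 2) ℚ,
      E (Ideal.Quotient.mk (twistedQuadricIdealQ k a) p)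
        = Ideal.Quotient.mk (twistedQuadricIdealQ k b) (scaleV c p) :=
    fun p => rfl
  unfold twistedQuadricPieceQ
  have hcomp : E.toLinearMap ∘ₗ (Ideal.Quotient.mkₐ ℚ (twistedQuadricIdealQ k a)).toLinearMap
      = (Ideal.Quotient.mkₐ ℚ (twistedQuadricIdealQ k b)).toLinearMap ∘ₗ (scaleV c).toLinearMap :=
    LinearMap.ext fun p => hE p
  rw [← Submodule.map_comp, hcomp, Submodule.map_comp, scaleV_map_WH c hc]


lemma mem_span3 {R : Type*} [CommRing R] {g1 g2 g3 x : R}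
    (hx : x ∈ Ideal.span {g1, g2, g3}) : ∃ p q r : R, x = p * g1 + q * g2 + r * g3 := by
  rw [Ideal.mem_span_insert] at hx
  obtain ⟨p, z, hz, rfl⟩ := hx
  rw [Ideal.mem_span_insert] at hz
  obtain ⟨q, w, hw, rfl⟩ := hz
  rw [Ideal.mem_span_singleton] at hw
  obtain ⟨r, rfl⟩ := hw
  exact ⟨p, q, r, by ring⟩


lemma L_vanish (k : ℕ) (hk : 1 ≤ k) (a : ℚ) {x : MvPolynomial (Fin 2) ℚ}
    (hx : x ∈ twistedQuadricIdealQ k a) :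
    coeff (Finsupp.single 1 2) x + a * coeff (Finsupp.single 0 (2*k)) x = 0 := by
  obtain ⟨p, q, r, rfl⟩ := mem_span3 hx
  have hg1 : (X 0 * X 1 : MvPolynomial (Fin 2) ℚ)
      = monomial (Finsupp.single 0 1 + Finsupp.single 1 1) 1 := by
    rw [X, X, monomial_mul, one_mul]
  have hg2 : (X 0 ^ (2*k+1) : MvPolynomial (Fin 2) ℚ)
      = monomial (Finsupp.single 0 (2*k+1)) 1 := X_pow_eq_monomial
  have hg3 : (C a * X 1 ^ 2 : MvPolynomial (Fin 2) ℚ)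
      = monomial (Finsupp.single 1 2) a := C_mul_X_pow_eq_monomial
  have hg4 : (X 0 ^ (2*k) : MvPolynomial (Fin 2) ℚ)
      = monomial (Finsupp.single 0 (2*k)) 1 := X_pow_eq_monomial
  rw [hg1, hg2, hg3, hg4, mul_sub]
  have notle : ∀ (i j : Fin 2) (m n : ℕ), i ≠ j → 1 ≤ m →
      ¬ (Finsupp.single i m : Fin 2 →₀ ℕ) ≤ Finsupp.single j n := by
    intro i j m n hij hm h
    have := h i
    simp [Finsupp.single_apply, hij, hij.symm] at this
    omega
  have nA : ¬ (Finsupp.single 0 1 + Finsupp.single 1 1 : Fin 2 →₀ ℕ) ≤ Finsupp.single 1 2 := by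
    intro h; have := h 0; simp [Finsupp.single_apply] at this
  have nB : ¬ (Finsupp.single 0 1 + Finsupp.single 1 1 : Fin 2 →₀ ℕ) ≤ Finsupp.single 0 (2*k) := by
    intro h; have := h 1; simp [Finsupp.single_apply] at this
  have nC : ¬ (Finsupp.single 0 (2*k+1) : Fin 2 →₀ ℕ) ≤ Finsupp.single 1 2 :=
    notle 0 1 (2*k+1) 2 (by decide) (by omega)
  have nD : ¬ (Finsupp.single 0 (2*k+1) : Fin 2 →₀ ℕ) ≤ Finsupp.single 0 (2*k) := by
    intro h; have := h 0; simp [Finsupp.single_apply] at this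
  have nE : ¬ (Finsupp.single 0 (2*k) : Fin 2 →₀ ℕ) ≤ Finsupp.single 1 2 :=
    notle 0 1 (2*k) 2 (by decide) (by omega)
  have nF : ¬ (Finsupp.single 1 2 : Fin 2 →₀ ℕ) ≤ Finsupp.single 0 (2*k) :=
    notle 1 0 2 (2*k) (by decide) (by omega)
  simp only [coeff_add, coeff_sub, coeff_mul_monomial', if_neg nA, if_neg nB, if_neg nC,
    if_neg nD, if_neg nE, if_neg nF, if_pos le_rfl, tsub_self]
  ring

lemma vsq_not_mem (k : ℕ) (hk : 1 ≤ k) (a : ℚ) :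
    (X 1 ^ 2 : MvPolynomial (Fin 2) ℚ) ∉ twistedQuadricIdealQ k a := by
  intro h
  have := L_vanish k hk a h
  rw [X_pow_eq_monomial, coeff_monomial, coeff_monomial] at this
  rw [if_pos rfl, if_neg] at this
  · simp at this
  · intro hEq
    have := congrArg (fun f : Fin 2 →₀ ℕ => f 1) hEq
    simp [Finsupp.single_apply] at this

lemma WH2k_le_span (k : ℕ) (hk : 1 ≤ k) :
    weightedHomogeneousSubmodule ℚ ![2, 2*k] (2*k)
      ≤ Submodule.span ℚ {(X 0 ^ k : MvPolynomial (Fin 2) ℚ), X 1} := by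
  intro p hp
  rw [mem_weightedHomogeneousSubmodule] at hp
  rw [← p.support_sum_monomial_coeff]
  apply Submodule.sum_mem
  intro d hd
  have hdeg : (Finsupp.weight ![2, 2*k]) d = 2*k := hp (mem_support_iff.mp hd)
  have hwt : (Finsupp.weight ![2, 2*k]) d = 2 * (d 0) + 2*k*(d 1) := by
    simp [Finsupp.weight_apply, Finsupp.sum_fintype, Fin.sum_univ_two, mul_comm]
  have hw : 2 * (d 0) + 2*k*(d 1) = 2*k := by rw [← hwt, hdeg]
  have hd1 : d 1 ≤ 1 := by
    by_contra hgt
    push_neg at hgt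
    have : 2*k*2 ≤ 2*k*(d 1) := Nat.mul_le_mul_left _ hgt
    omega
  have hcases : (d 1 = 0 ∧ d 0 = k) ∨ (d 1 = 1 ∧ d 0 = 0) := by
    interval_cases h1 : d 1
    · left; constructor; rfl; omega
    · right; constructor; rfl; omega
  rcases hcases with ⟨h1, h0⟩ | ⟨h1, h0⟩
  · have hdd : d = Finsupp.single 0 k := by
      ext i
      fin_cases i <;> simp [Finsupp.single_apply, h0, h1]
    have hmon : (monomial (Finsupp.single (0:Fin 2) k) (coeff (Finsupp.single 0 k) p) : MvPolynomial (Fin 2) ℚ)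
        = (coeff (Finsupp.single 0 k) p) • (X 0 ^ k) := by
      rw [X_pow_eq_monomial, smul_monomial, smul_eq_mul, mul_one]
    rw [hdd, hmon]
    exact Submodule.smul_mem _ _ (Submodule.subset_span (Set.mem_insert _ _))
  · have hdd : d = Finsupp.single 1 1 := by
      ext i
      fin_cases i <;> simp [Finsupp.single_apply, h0, h1]
    have hmon : (monomial (Finsupp.single (1:Fin 2) 1) (coeff (Finsupp.single 1 1) p) : MvPolynomial (Fin 2) ℚ)
        = (coeff (Finsupp.single 1 1) p) • (X 1) := by
      rw [← pow_one (X 1 : MvPolynomial (Fin 2) ℚ), X_pow_eq_monomial, smul_monomial,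
        smul_eq_mul, mul_one]
    rw [hdd, hmon]
    exact Submodule.smul_mem _ _ (Submodule.subset_span
      (Set.mem_insert_of_mem _ rfl))


lemma piece2k_le (k : ℕ) (hk : 1 ≤ k) (b : ℚ) :
    twistedQuadricPieceQ k b (2*k) ≤ Submodule.span ℚ
      {Ideal.Quotient.mk (twistedQuadricIdealQ k b) (X 0 ^ k),
       Ideal.Quotient.mk (twistedQuadricIdealQ k b) (X 1)} := by
  unfold twistedQuadricPieceQ
  refine le_trans (Submodule.map_mono (WH2k_le_span k hk)) ?_
  rw [Submodule.map_span]
  rw [Set.image_insert_eq, Set.image_singleton]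
  exact le_rfl

lemma rel_HV (k : ℕ) (hk : 1 ≤ k) (b : ℚ) :
    Ideal.Quotient.mk (twistedQuadricIdealQ k b) (X 0 ^ k) *
      Ideal.Quotient.mk (twistedQuadricIdealQ k b) (X 1) = 0 := by
  rw [← map_mul, Ideal.Quotient.eq_zero_iff_mem]
  have : (X 0 ^ k * X 1 : MvPolynomial (Fin 2) ℚ) = X 0 ^ (k-1) * (X 0 * X 1) := by
    rw [← mul_assoc, ← pow_succ]
    congr 2
    omega
  rw [this]
  exact Ideal.mul_mem_left _ _ (Ideal.subset_span (Set.mem_insert _ _))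

lemma rel_HH (k : ℕ) (b : ℚ) :
    Ideal.Quotient.mkₐ ℚ (twistedQuadricIdealQ k b) (X 0 ^ k) ^ 2
      = b • Ideal.Quotient.mkₐ ℚ (twistedQuadricIdealQ k b) (X 1) ^ 2 := by
  have hsm : b • Ideal.Quotient.mkₐ ℚ (twistedQuadricIdealQ k b) (X 1) ^ 2
      = Ideal.Quotient.mkₐ ℚ (twistedQuadricIdealQ k b) (C b * X 1 ^ 2) := by
    rw [← map_pow, ← map_smul, smul_eq_C_mul]
  rw [hsm, ← map_pow, ← pow_mul, mul_comm k 2]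
  simp only [Ideal.Quotient.mkₐ_eq_mk]
  rw [Ideal.Quotient.mk_eq_mk_iff_sub_mem]
  exact Ideal.subset_span (Set.mem_insert_of_mem _ (Set.mem_insert_of_mem _ rfl))

lemma Vsq_ne (k : ℕ) (hk : 1 ≤ k) (b : ℚ) :
    Ideal.Quotient.mk (twistedQuadricIdealQ k b) (X 1) ^ 2 ≠ 0 := by
  rw [← map_pow, Ne, Ideal.Quotient.eq_zero_iff_mem]
  exact vsq_not_mem k hk b

set_option synthInstance.maxHeartbeats 1000000 in
set_option maxHeartbeats 2000000 in
lemma forward_dir (k : ℕ) (hk : 1 ≤ k) (a b : ℚ) (ha : a ≠ 0) (hb : b ≠ 0)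
    (e : (MvPolynomial (Fin 2) ℚ ⧸ twistedQuadricIdealQ k a)
        ≃ₐ[ℚ] (MvPolynomial (Fin 2) ℚ ⧸ twistedQuadricIdealQ k b))
    (he : ∀ j : ℕ, (twistedQuadricPieceQ k a j).map e.toLinearMap = twistedQuadricPieceQ k b j) :
    IsSquare (a / b) := by
  classical
  have hXWH : IsWeightedHomogeneous ![2,2*k] (X 1 : MvPolynomial (Fin 2) ℚ) (2*k) := by
    have := isWeightedHomogeneous_X ℚ ![2,2*k] 1
    simpa using this
  have hX0WH : IsWeightedHomogeneous ![2,2*k] (X 0 ^ k : MvPolynomial (Fin 2) ℚ) (2*k) := by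
    rw [X_pow_eq_monomial]
    apply isWeightedHomogeneous_monomial
    simp [Finsupp.weight_apply, Finsupp.sum_fintype, Fin.sum_univ_two, mul_comm]
  have hVa : (Ideal.Quotient.mkₐ ℚ (twistedQuadricIdealQ k a)) (X 1)
      ∈ twistedQuadricPieceQ k a (2*k) := ⟨X 1, hXWH, rfl⟩
  have hHa : (Ideal.Quotient.mkₐ ℚ (twistedQuadricIdealQ k a)) (X 0 ^ k)
      ∈ twistedQuadricPieceQ k a (2*k) := ⟨X 0 ^ k, hX0WH, rfl⟩
  have hVb' : e ((Ideal.Quotient.mkₐ ℚ (twistedQuadricIdealQ k a)) (X 1))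
      ∈ twistedQuadricPieceQ k b (2*k) := by
    rw [← he (2*k)]
    exact Submodule.mem_map_of_mem hVa
  have hHb' : e ((Ideal.Quotient.mkₐ ℚ (twistedQuadricIdealQ k a)) (X 0 ^ k))
      ∈ twistedQuadricPieceQ k b (2*k) := by
    rw [← he (2*k)]
    exact Submodule.mem_map_of_mem hHa
  obtain ⟨α, β, hαβ⟩ := Submodule.mem_span_pair.mp (piece2k_le k hk b hVb')
  obtain ⟨γ, δ, hγδ⟩ := Submodule.mem_span_pair.mp (piece2k_le k hk b hHb')
  set x := Ideal.Quotient.mk (twistedQuadricIdealQ k b) (X 0 ^ k) with hx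
  set y := Ideal.Quotient.mk (twistedQuadricIdealQ k b) (X 1) with hy
  have h2 : x ^ 2 = b • y ^ 2 := by
    have := rel_HH k b
    exact this
  have h0 : x * y = 0 := rel_HV k hk b
  have hy2 : y ^ 2 ≠ 0 := Vsq_ne k hk b
  have h2a : (Ideal.Quotient.mk (twistedQuadricIdealQ k a) (X 0 ^ k)) ^ 2
      = a • (Ideal.Quotient.mk (twistedQuadricIdealQ k a) (X 1)) ^ 2 := by
    have := rel_HH k a
    simpa [Ideal.Quotient.mkₐ_eq_mk] using this
  have hy2a : (Ideal.Quotient.mk (twistedQuadricIdealQ k a) (X 1)) ^ 2 ≠ 0 := Vsq_ne k hk a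
  have hmm : ∀ (r s : ℚ) (u v : MvPolynomial (Fin 2) ℚ ⧸ twistedQuadricIdealQ k b),
      (r • u) * (s • v) = (r*s) • (u*v) := fun r s u v => by
    rw [smul_mul_assoc, mul_smul_comm, smul_smul]
  have hprod : ∀ p q r s : ℚ, (p • x + q • y) * (r • x + s • y) = (p*r*b + q*s) • y^2 := by
    intro p q r s
    rw [add_mul, mul_add, mul_add, hmm, hmm, hmm, hmm, ← pow_two, ← pow_two, h2, h0,
      mul_comm y x, h0, smul_zero, smul_zero, smul_smul, add_zero, zero_add, ← add_smul]
  -- mkₐ = mk bridging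
  have hmk : ∀ p : MvPolynomial (Fin 2) ℚ,
      (Ideal.Quotient.mkₐ ℚ (twistedQuadricIdealQ k a)) p
        = Ideal.Quotient.mk (twistedQuadricIdealQ k a) p := fun p => rfl
  -- key scalar identities
  have keyV : e (Ideal.Quotient.mk (twistedQuadricIdealQ k a) (X 1)) = α • x + β • y := by
    rw [← hmk, ← hαβ]
  have keyH : e (Ideal.Quotient.mk (twistedQuadricIdealQ k a) (X 0 ^ k)) = γ • x + δ • y := by
    rw [← hmk, ← hγδ]
  -- t ≠ 0
  have hsq : e ((Ideal.Quotient.mk (twistedQuadricIdealQ k a) (X 1)) ^ 2)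
      = (α*α*b + β*β) • y^2 := by
    rw [pow_two, map_mul, keyV, hprod]
  have tne : α*α*b + β*β ≠ 0 := by
    intro h0t
    rw [h0t, zero_smul] at hsq
    exact hy2a (e.injective (by rw [hsq, map_zero]))
  -- orthogonality
  have horth : γ*α*b + δ*β = 0 := by
    have h1 : e ((Ideal.Quotient.mk (twistedQuadricIdealQ k a) (X 0 ^ k))
        * (Ideal.Quotient.mk (twistedQuadricIdealQ k a) (X 1))) = 0 := by
      rw [rel_HV k hk a, map_zero]
    rw [map_mul, keyH, keyV, hprod] at h1
    rcases smul_eq_zero.mp h1 with h | h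
    · exact h
    · exact absurd h hy2
  -- diagonal identity
  have hdiag : γ*γ*b + δ*δ = a * (α*α*b + β*β) := by
    have h1 : e ((Ideal.Quotient.mk (twistedQuadricIdealQ k a) (X 0 ^ k)) ^ 2)
        = (γ*γ*b + δ*δ) • y^2 := by
      rw [pow_two, map_mul, keyH, hprod]
    rw [h2a, map_smul, hsq, smul_smul] at h1
    have h2' : (γ*γ*b + δ*δ - a * (α*α*b + β*β)) • y^2 = 0 := by
      rw [sub_smul, h1, sub_self]
    rcases smul_eq_zero.mp h2' with h | h
    · linarith [sub_eq_zero.mp (by linarith [h] : γ*γ*b + δ*δ - a * (α*α*b + β*β) = 0)]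
    · exact absurd h hy2
  refine ⟨(α*δ - β*γ)/(α*α*b + β*β), ?_⟩
  rw [div_mul_div_comm, div_eq_div_iff hb (mul_ne_zero tne tne)]
  linear_combination (α*γ*b + β*δ) * horth - (α*α*b + β*β) * hdiag
/-- For nonzero rationals `a, b` and `k ≥ 1`, the graded ℚ-algebras
`ℚ[h,v]/(hv, h^{2k+1}, h^{2k} − a v²)` and `ℚ[h,v]/(hv, h^{2k+1}, h^{2k} − b v²)`
(`deg h = 2`, `deg v = 2k`) are isomorphic if and only if `a/b` is a square in ℚ. -/
theorem twisted_quadrics_iso_iff_square (k : ℕ) (hk : 1 ≤ k) (a b : ℚ)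
    (ha : a ≠ 0) (hb : b ≠ 0) :
    (∃ e : (MvPolynomial (Fin 2) ℚ ⧸ twistedQuadricIdealQ k a)
        ≃ₐ[ℚ] (MvPolynomial (Fin 2) ℚ ⧸ twistedQuadricIdealQ k b),
      ∀ j : ℕ, (twistedQuadricPieceQ k a j).map e.toLinearMap = twistedQuadricPieceQ k b j)
    ↔ IsSquare (a / b) := by
  constructor
  · rintro ⟨e, he⟩
    exact forward_dir k hk a b ha hb e he
  · rintro ⟨r, hr⟩
    have hr0 : r ≠ 0 := by
      intro h
      rw [h, mul_zero] at hr
      exact ha (by field_simp at hr; simpa using hr)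
    have hc : a * (r⁻¹) ^ 2 = b := by
      field_simp
      rw [mul_comm] at hr
      field_simp at hr
      linarith [hr]
    exact backward_dir k a b r⁻¹ (inv_ne_zero hr0) hc
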